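/- Let X be a metric space, Ω ⊆ X a set, L > 0, and let μ ≤ 0 be a real number. Let f : Ω → ℝ be L-Lipschitz and μ-concave on Ω. Let a ∈ [0, 1), b ≥ 0, and let φ : ℝ → ℝ be twice continuously differentiable with 1 − a ≤ φ′(t) ≤ 1 + a and |φ″(t)| ≤ b for all t ∈ ℝ. Then the composition φ ∘ f is (b·L² + (1−a)·μ)-concave on Ω. -/

import Mathlib

/-- A unit-speed geodesic (on `[a,b]`) in a metric space. -/
def IsUnitSpeedGeodesic {X : Type*} [MetricSpace X] (γ : ℝ → X) (a b : ℝ) : Prop :=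
  ∀ s ∈ Set.Icc a b, ∀ t ∈ Set.Icc a b, dist (γ s) (γ t) = |s - t|

/-- `f` is `λ`-concave on `Ω`: along every unit-speed geodesic with image in `Ω`,
`t ↦ f (γ t) - (λ/2) t²` is concave. -/
def LambdaConcaveOn {X : Type*} [MetricSpace X] (lam : ℝ) (f : X → ℝ) (Ω : Set X) : Prop :=
  ∀ (γ : ℝ → X) (a b : ℝ), a ≤ b → IsUnitSpeedGeodesic γ a b →
    (∀ t ∈ Set.Icc a b, γ t ∈ Ω) →
    ConcaveOn ℝ (Set.Icc a b) (fun t => f (γ t) - lam / 2 * t ^ 2)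

/-- Post-composing an `L`-Lipschitz, `μ`-concave function with a `C²` reparametrization
`φ` whose first derivative lies in `[1-a, 1+a]` and whose second derivative is bounded
by `b` yields a `(bL² + (1-a)μ)`-concave function. -/
theorem concavity_of_reparametrized {X : Type*} [MetricSpace X] (Ω : Set X)
    (L μ : ℝ) (hL : 0 < L) (hμ : μ ≤ 0) (f : X → ℝ)
    (hfLip : ∀ x ∈ Ω, ∀ y ∈ Ω, |f x - f y| ≤ L * dist x y)
    (hfConc : LambdaConcaveOn μ f Ω)
    (a b : ℝ) (ha0 : 0 ≤ a) (ha1 : a < 1) (hb : 0 ≤ b)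
    (φ : ℝ → ℝ) (hφ : ContDiff ℝ 2 φ)
    (hφ' : ∀ t : ℝ, 1 - a ≤ deriv φ t ∧ deriv φ t ≤ 1 + a)
    (hφ'' : ∀ t : ℝ, |deriv (deriv φ) t| ≤ b) :
    LambdaConcaveOn (b * L ^ 2 + (1 - a) * μ) (φ ∘ f) Ω := by
  -- differentiability facts about φ
  have hφd : Differentiable ℝ φ := hφ.differentiable (by norm_num)
  have hφd2 : Differentiable ℝ (deriv φ) := by
    have h2 : ContDiff ℝ ((1 : WithTop ℕ∞) + 1) φ := by exact_mod_cast hφ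
    exact ((contDiff_succ_iff_deriv.mp h2).2.2).differentiable one_ne_zero
  -- φ is monotone
  have hφmono : Monotone φ := monotone_of_deriv_nonneg hφd fun x => by
    nlinarith [(hφ' x).1]
  -- lower Lipschitz bound for φ
  have hlow : ∀ x y : ℝ, x ≤ y → φ x + (1 - a) * (y - x) ≤ φ y := by
    intro x y hxy
    have hmono : Monotone (fun t => φ t - (1 - a) * t) := by
      apply monotone_of_deriv_nonneg
      · exact hφd.sub (differentiable_id.const_mul _)
      · intro t
        have hd : HasDerivAt (fun t => φ t - (1 - a) * t) (deriv φ t - (1 - a) * 1) t :=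
          (hφd t).hasDerivAt.sub ((hasDerivAt_id t).const_mul (1 - a))
        rw [hd.deriv]
        have := (hφ' t).1
        linarith
    have := hmono hxy
    simp only at this
    linarith
  -- semiconcavity of φ
  have hψ : ConcaveOn ℝ Set.univ (fun x => φ x - b / 2 * x ^ 2) := by
    have hderiv : deriv (fun x => φ x - b / 2 * x ^ 2) = fun x => deriv φ x - b * x := by
      funext x
      have hd : HasDerivAt (fun x => φ x - b / 2 * x ^ 2)
          (deriv φ x - b / 2 * (2 * x ^ 1)) x :=
        (hφd x).hasDerivAt.sub ((hasDerivAt_pow 2 x).const_mul (b / 2))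
      rw [hd.deriv]; ring
    apply concaveOn_univ_of_deriv2_nonpos
    · exact hφd.sub ((differentiable_pow 2).const_mul _)
    · rw [hderiv]
      exact hφd2.sub (differentiable_id.const_mul _)
    · intro x
      have h2 : deriv^[2] (fun x => φ x - b / 2 * x ^ 2) x
          = deriv (deriv (fun x => φ x - b / 2 * x ^ 2)) x := rfl
      rw [h2, hderiv]
      have hd : HasDerivAt (fun x => deriv φ x - b * x) (deriv (deriv φ) x - b * 1) x :=
        (hφd2 x).hasDerivAt.sub ((hasDerivAt_id x).const_mul b)
      rw [hd.deriv]
      have := abs_le.mp (hφ'' x)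
      linarith [this.2]
  -- main argument
  intro γ α β hαβ hgeo hΩ
  have hg := hfConc γ α β hαβ hgeo hΩ
  refine ⟨convex_Icc α β, ?_⟩
  intro x hx y hy p q hp hq hpq
  simp only [smul_eq_mul, Function.comp_apply]
  have hgm := hg.2 hx hy hp hq hpq
  simp only [smul_eq_mul] at hgm
  -- Lipschitz along the geodesic
  have hlipg : |f (γ x) - f (γ y)| ≤ L * |x - y| := by
    have h := hfLip (γ x) (hΩ x hx) (γ y) (hΩ y hy)
    rwa [hgeo x hx y hy] at h
  set u := f (γ x) with hu
  set v := f (γ y) with hv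
  set w := f (γ (p * x + q * y)) with hw
  have hq1 : q = 1 - p := by linarith
  subst hq1
  set A := p * u + (1 - p) * v with hA
  set D := -(μ / 2) * (p * (1 - p) * (x - y) ^ 2) with hD
  have hDnn : 0 ≤ D := by
    have : 0 ≤ p * (1 - p) * (x - y) ^ 2 := by positivity
    rw [hD]; nlinarith
  have h1 : A + D ≤ w := by
    have idx : p * x ^ 2 + (1 - p) * y ^ 2 - (p * x + (1 - p) * y) ^ 2
        = p * (1 - p) * (x - y) ^ 2 := by ring
    rw [hA, hD]; nlinarith [hgm]
  have h2 : φ A + (1 - a) * D ≤ φ (A + D) := by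
    have := hlow A (A + D) (by linarith)
    linarith
  have h3 : φ (A + D) ≤ φ w := hφmono h1
  have h4 : p * φ u + (1 - p) * φ v ≤ φ A + b / 2 * (p * (1 - p) * (u - v) ^ 2) := by
    have hm := hψ.2 (Set.mem_univ u) (Set.mem_univ v) hp hq hpq
    simp only [smul_eq_mul] at hm
    have idu : p * u ^ 2 + (1 - p) * v ^ 2 - (p * u + (1 - p) * v) ^ 2
        = p * (1 - p) * (u - v) ^ 2 := by ring
    rw [hA]; linarith [hm, idu]
  have h5 : (u - v) ^ 2 ≤ L ^ 2 * (x - y) ^ 2 := by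
    calc (u - v) ^ 2 = |u - v| ^ 2 := (sq_abs _).symm
      _ ≤ (L * |x - y|) ^ 2 := by
          have : (0:ℝ) ≤ |u - v| := abs_nonneg _
          exact pow_le_pow_left₀ this hlipg 2
      _ = L ^ 2 * (x - y) ^ 2 := by rw [mul_pow, sq_abs]
  have h6 : b / 2 * (p * (1 - p) * (u - v) ^ 2)
      ≤ b / 2 * (p * (1 - p) * (L ^ 2 * (x - y) ^ 2)) := by
    have hpq' : 0 ≤ p * (1 - p) := mul_nonneg hp hq
    exact mul_le_mul_of_nonneg_left (mul_le_mul_of_nonneg_left h5 hpq')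
      (by positivity : (0:ℝ) ≤ b / 2)
  have e1 : b / 2 * (p * (1 - p) * (L ^ 2 * (x - y) ^ 2)) - (1 - a) * D
      = (b * L ^ 2 + (1 - a) * μ) / 2 * (p * (1 - p) * (x - y) ^ 2) := by
    rw [hD]; ring
  have hgoal : p * φ u + (1 - p) * φ v
      ≤ φ w + (b * L ^ 2 + (1 - a) * μ) / 2 * (p * (1 - p) * (x - y) ^ 2) := by
    linarith [h2, h3, h4, h6, e1]
  linarith [hgoal]
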